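/- In any integrated k-coloring of a finite graph G with m edges, at least ((k−1)/k)·m of the edges are mixed (i.e., have endpoints of different colors). -/

import Mathlib

open Finset

theorem integrated_mixing_bound
    (V : Type) [Fintype V] [DecidableEq V]
    (G : SimpleGraph V) [DecidableRel G.Adj]
    (k : ℕ) (c : V → Fin k)
    (hint : ∀ v : V,
      (((G.neighborFinset v).filter (fun u => c u = c v)).card : ℝ)
        ≤ (1 / k) * G.degree v) :
    ((k - 1 : ℝ) / k) * G.edgeFinset.card
      ≤ ((G.edgeFinset.filter (fun e => ¬ (Sym2.map c e).IsDiag)).card : ℝ) := by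
  classical
  rcases Nat.eq_zero_or_pos k with hk | hk
  · subst hk
    haveI : IsEmpty V := ⟨fun v => (c v).elim0⟩
    have : G.edgeFinset = ∅ := by
      apply Finset.eq_empty_of_forall_notMem
      intro e
      induction e using Sym2.ind with
      | _ u v => exact (IsEmpty.false u).elim
    simp [this]
  have hkR : (0 : ℝ) < k := by exact_mod_cast hk
  set G' : SimpleGraph V :=
    { Adj := fun u v => G.Adj u v ∧ c u = c v,
      symm := ⟨fun u v h => ⟨h.1.symm, h.2.symm⟩⟩,
      loopless := ⟨fun v h => G.loopless.irrefl v h.1⟩ }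
  haveI : DecidableRel G'.Adj := fun u v => instDecidableAnd
  have hnb : ∀ v, G'.neighborFinset v =
      (G.neighborFinset v).filter (fun u => c u = c v) := by
    intro v
    ext u
    simp only [SimpleGraph.mem_neighborFinset, Finset.mem_filter, G']
    constructor
    · rintro ⟨h1, h2⟩; exact ⟨h1, h2.symm⟩
    · rintro ⟨h1, h2⟩; exact ⟨h1, h2.symm⟩
  have hedges : G.edgeFinset.filter (fun e => (Sym2.map c e).IsDiag) = G'.edgeFinset := by
    ext e
    induction e using Sym2.ind with
    | _ u v =>
      simp [SimpleGraph.mem_edgeFinset, SimpleGraph.mem_edgeSet, G']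
  have hsum : ∑ v : V, G'.degree v = 2 * G'.edgeFinset.card :=
    SimpleGraph.sum_degrees_eq_twice_card_edges G'
  have hdegsum : ∑ v : V, G.degree v = 2 * G.edgeFinset.card :=
    SimpleGraph.sum_degrees_eq_twice_card_edges G
  set m := G.edgeFinset.card
  set mono := (G.edgeFinset.filter (fun e => (Sym2.map c e).IsDiag)).card
  set mixed := (G.edgeFinset.filter (fun e => ¬ (Sym2.map c e).IsDiag)).card
  have hsplit : mono + mixed = m :=
    Finset.card_filter_add_card_filter_not _
  have hmono : (2 * mono : ℝ) ≤ (1 / k) * (2 * m) := by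
    have h1 : ((∑ v : V, G'.degree v : ℕ) : ℝ) ≤ (1 / k) * (∑ v : V, G.degree v : ℕ) := by
      push_cast
      rw [Finset.mul_sum]
      apply Finset.sum_le_sum
      intro v _
      have hd : G'.degree v = ((G.neighborFinset v).filter (fun u => c u = c v)).card := by
        rw [← hnb v]; rfl
      rw [hd]
      exact hint v
    rw [hsum, hdegsum] at h1
    have : mono = G'.edgeFinset.card := congrArg Finset.card hedges
    rw [this]
    exact_mod_cast h1
  have hms : (mono : ℝ) + (mixed : ℝ) = m := by exact_mod_cast hsplit
  have key : ((k - 1 : ℝ) / k) * m = m - (1 / k) * m := by field_simp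
  rw [key]
  linarith
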